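/- Let p₁ ∈ ℂ[t] be monic of degree d₁ − 1 with d₁ ≥ 1, let p̂₁(t) = t^{d₁−1}p₁(1/t), and let R = ℂ[x₁,x₂,y₁,y₂]/(y₁x₁^{d₁} − x₂ + p̂₁(x₁), y₂x₂ − x₁ + 1). Then the localization of R at the element x₁·y₂ is isomorphic as a ℂ-algebra to the Laurent polynomial ring ℂ[v₁^{±1}, v₂^{±1}], via the map x₁ ↦ v₁, x₂ ↦ (v₁ − 1)·v₂^{−1}, y₁ ↦ (v₁ − 1 − p̂₁(v₁)·v₂)·(v₁^{d₁}·v₂)^{−1}, y₂ ↦ v₂, whose inverse sends v₁ ↦ x₁ and v₂ ↦ y₂. -/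

import Mathlib

open MvPolynomial AddMonoidAlgebra

noncomputable section

set_option maxHeartbeats 1000000
set_option synthInstance.maxHeartbeats 400000

/-- Relations of the coordinate ring of `S_{p₁,1}`: variables `x₁ = X 0`, `x₂ = X 1`,
`y₁ = X 2`, `y₂ = X 3`; `p̂₁` is `p₁.reverse`. -/
abbrev srel₁ (p₁ : Polynomial ℂ) (d₁ : ℕ) : Set (MvPolynomial (Fin 4) ℂ) :=
  {X 2 * X 0 ^ d₁ - X 1 + Polynomial.aeval (X 0) p₁.reverse,
   X 3 * X 1 - X 0 + 1}

/-- The coordinate ring of `S_{p₁,1}`. -/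
abbrev SRing₁ (p₁ : Polynomial ℂ) (d₁ : ℕ) : Type :=
  MvPolynomial (Fin 4) ℂ ⧸ Ideal.span (srel₁ p₁ d₁)

/-- The Laurent polynomial ring `ℂ[v₁^{±1}, v₂^{±1}]`; `v₁^a·v₂^b = single (a,b) 1`. -/
abbrev Laurent2 : Type := AddMonoidAlgebra ℂ (ℤ × ℤ)

namespace Stmt14Aux

variable (p₁ : Polynomial ℂ) (d₁ : ℕ)

abbrev Loc : Type :=
  Localization.Away (Ideal.Quotient.mk (Ideal.span (srel₁ p₁ d₁)) (X 0 * X 3))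

/-- The canonical map `MvPolynomial → SRing₁ → Loc` as an algebra hom. -/
def φ : MvPolynomial (Fin 4) ℂ →ₐ[ℂ] Loc p₁ d₁ :=
  (IsScalarTower.toAlgHom ℂ (SRing₁ p₁ d₁) (Loc p₁ d₁)).comp
    (Ideal.Quotient.mkₐ ℂ (Ideal.span (srel₁ p₁ d₁)))

lemma φ_apply (q : MvPolynomial (Fin 4) ℂ) :
    φ p₁ d₁ q = algebraMap (SRing₁ p₁ d₁) (Loc p₁ d₁) (Ideal.Quotient.mk _ q) := rfl

lemma φ_rel (r : MvPolynomial (Fin 4) ℂ) (hr : r ∈ srel₁ p₁ d₁) : φ p₁ d₁ r = 0 := by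
  rw [φ_apply, Ideal.Quotient.eq_zero_iff_mem.2 (Ideal.subset_span hr), map_zero]

lemma hrel1 :
    φ p₁ d₁ (X 2) * φ p₁ d₁ (X 0) ^ d₁ - φ p₁ d₁ (X 1) +
      Polynomial.aeval (φ p₁ d₁ (X 0)) p₁.reverse = 0 := by
  have h := φ_rel p₁ d₁ _ (Or.inl rfl : _ ∈ srel₁ p₁ d₁)
  simp only [map_add, map_sub, map_mul, map_pow] at h
  rw [← Polynomial.aeval_algHom_apply] at h
  exact h

lemma hrel2 : φ p₁ d₁ (X 3) * φ p₁ d₁ (X 1) - φ p₁ d₁ (X 0) + 1 = 0 := by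
  have h := φ_rel p₁ d₁ _ (Or.inr rfl : _ ∈ srel₁ p₁ d₁)
  simp only [map_add, map_sub, map_mul, map_one] at h
  exact h

/-! ### The forward map -/

/-- Images of the four variables in `Laurent2`. -/
def w : Fin 4 → Laurent2 :=
  ![single ((1 : ℤ), (0 : ℤ)) 1,
    (single ((1 : ℤ), (0 : ℤ)) 1 - 1) * single ((0 : ℤ), (-1 : ℤ)) 1,
    (single ((1 : ℤ), (0 : ℤ)) 1 - 1 -
      Polynomial.aeval (single ((1 : ℤ), (0 : ℤ)) 1 : Laurent2) p₁.reverse *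
        single ((0 : ℤ), (1 : ℤ)) 1) * single (-(d₁ : ℤ), (-1 : ℤ)) 1,
    single ((0 : ℤ), (1 : ℤ)) 1]

def fwd₀ : MvPolynomial (Fin 4) ℂ →ₐ[ℂ] Laurent2 := aeval (w p₁ d₁)

lemma fwd₀_X (i : Fin 4) : fwd₀ p₁ d₁ (X i) = w p₁ d₁ i := aeval_X _ _

lemma fwd₀_rel : ∀ r ∈ Ideal.span (srel₁ p₁ d₁), fwd₀ p₁ d₁ r = 0 := by
  intro r hr
  refine (Ideal.span_le.2 ?_ : Ideal.span (srel₁ p₁ d₁) ≤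
      RingHom.ker (fwd₀ p₁ d₁).toRingHom) hr
  rintro r (rfl | rfl) <;>
    simp only [SetLike.mem_coe, RingHom.mem_ker, AlgHom.toRingHom_eq_coe, RingHom.coe_coe,
      map_add, map_sub, map_mul, map_pow, map_one, fwd₀_X]
  · rw [← Polynomial.aeval_algHom_apply, fwd₀_X]
    show (single ((1:ℤ),(0:ℤ)) 1 - 1 -
        Polynomial.aeval (single ((1:ℤ),(0:ℤ)) 1 : Laurent2) p₁.reverse *
          single ((0:ℤ),(1:ℤ)) 1) * single (-(d₁:ℤ), (-1:ℤ)) 1 *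
        (single ((1:ℤ),(0:ℤ)) 1) ^ d₁ -
      (single ((1:ℤ),(0:ℤ)) 1 - 1) * single ((0:ℤ),(-1:ℤ)) 1 +
      Polynomial.aeval (single ((1:ℤ),(0:ℤ)) 1 : Laurent2) p₁.reverse = 0
    have hA : (single (-(d₁:ℤ), (-1:ℤ)) (1:ℂ) : Laurent2) *
        (single ((1:ℤ),(0:ℤ)) 1) ^ d₁ = single ((0:ℤ),(-1:ℤ)) 1 := by
      rw [AddMonoidAlgebra.single_pow, AddMonoidAlgebra.single_mul_single]; norm_num
    have hB : (single ((0:ℤ),(1:ℤ)) (1:ℂ) : Laurent2) * single ((0:ℤ),(-1:ℤ)) 1 = 1 := by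
      rw [AddMonoidAlgebra.single_mul_single]; norm_num [← AddMonoidAlgebra.one_def]; rfl
    linear_combination (single ((1:ℤ),(0:ℤ)) (1:ℂ) - 1 -
        Polynomial.aeval (single ((1:ℤ),(0:ℤ)) 1 : Laurent2) p₁.reverse *
          single ((0:ℤ),(1:ℤ)) 1) * hA -
      Polynomial.aeval (single ((1:ℤ),(0:ℤ)) 1 : Laurent2) p₁.reverse * hB
  · show (single ((0:ℤ),(1:ℤ)) 1 : Laurent2) *
        ((single ((1:ℤ),(0:ℤ)) 1 - 1) * single ((0:ℤ),(-1:ℤ)) 1) -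
        single ((1:ℤ),(0:ℤ)) 1 + 1 = 0
    have hB : (single ((0:ℤ),(1:ℤ)) (1:ℂ) : Laurent2) * single ((0:ℤ),(-1:ℤ)) 1 = 1 := by
      rw [AddMonoidAlgebra.single_mul_single]; norm_num [← AddMonoidAlgebra.one_def]; rfl
    linear_combination (single ((1:ℤ),(0:ℤ)) (1:ℂ) - 1) * hB

def fwd₁ : SRing₁ p₁ d₁ →ₐ[ℂ] Laurent2 :=
  Ideal.Quotient.liftₐ _ (fwd₀ p₁ d₁) (fwd₀_rel p₁ d₁)

lemma fwd₁_mk (q : MvPolynomial (Fin 4) ℂ) :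
    fwd₁ p₁ d₁ (Ideal.Quotient.mk _ q) = fwd₀ p₁ d₁ q := rfl

lemma fwd₁_unit :
    IsUnit ((fwd₁ p₁ d₁).toRingHom (Ideal.Quotient.mk (Ideal.span (srel₁ p₁ d₁))
      (X 0 * X 3))) := by
  have h : (fwd₁ p₁ d₁).toRingHom (Ideal.Quotient.mk _ (X 0 * X 3)) =
      single ((1 : ℤ), (1 : ℤ)) 1 := by
    show fwd₀ p₁ d₁ (X 0 * X 3) = _
    rw [map_mul, fwd₀_X, fwd₀_X]
    show (single ((1:ℤ),(0:ℤ)) 1 : Laurent2) * single ((0:ℤ),(1:ℤ)) 1 = _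
    rw [AddMonoidAlgebra.single_mul_single]; norm_num
  rw [h]

  exact IsUnit.of_mul_eq_one (single ((-1:ℤ),(-1:ℤ)) 1) (by
    rw [AddMonoidAlgebra.single_mul_single,
      show ((1:ℤ),(1:ℤ)) + (-1,-1) = 0 by decide, mul_one]
    exact AddMonoidAlgebra.one_def.symm)

def fwdR : Loc p₁ d₁ →+* Laurent2 :=
  IsLocalization.Away.lift (S := Loc p₁ d₁)
    (g := (fwd₁ p₁ d₁).toRingHom) _ (fwd₁_unit p₁ d₁)

lemma fwdR_algebraMap (a : SRing₁ p₁ d₁) :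
    fwdR p₁ d₁ (algebraMap (SRing₁ p₁ d₁) (Loc p₁ d₁) a) = fwd₁ p₁ d₁ a :=
  IsLocalization.Away.lift_eq _ _ _

def fwd : Loc p₁ d₁ →ₐ[ℂ] Laurent2 :=
  { fwdR p₁ d₁ with
    commutes' := fun c => by
      show fwdR p₁ d₁ (algebraMap ℂ (Loc p₁ d₁) c) = algebraMap ℂ Laurent2 c
      rw [IsScalarTower.algebraMap_apply ℂ (SRing₁ p₁ d₁) (Loc p₁ d₁),
        fwdR_algebraMap, AlgHom.commutes] }

lemma fwd_φ (q : MvPolynomial (Fin 4) ℂ) :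
    fwd p₁ d₁ (φ p₁ d₁ q) = fwd₀ p₁ d₁ q := fwdR_algebraMap p₁ d₁ _

/-! ### Units in the localization -/

lemma unit_s : IsUnit (φ p₁ d₁ (X 0 * X 3)) :=
  IsLocalization.map_units (M := Submonoid.powers
    (Ideal.Quotient.mk (Ideal.span (srel₁ p₁ d₁)) (X 0 * X 3))) (Loc p₁ d₁)
    ⟨_, Submonoid.mem_powers _⟩

def U₁ : (Loc p₁ d₁)ˣ :=
  Units.mkOfMulEqOne (φ p₁ d₁ (X 0)) (φ p₁ d₁ (X 3) * ↑(unit_s p₁ d₁).unit⁻¹) (by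
    rw [← mul_assoc, ← map_mul]
    exact (unit_s p₁ d₁).mul_val_inv)

def U₂ : (Loc p₁ d₁)ˣ :=
  Units.mkOfMulEqOne (φ p₁ d₁ (X 3)) (φ p₁ d₁ (X 0) * ↑(unit_s p₁ d₁).unit⁻¹) (by
    rw [← mul_assoc, mul_comm (φ p₁ d₁ (X 3)), ← map_mul]
    exact (unit_s p₁ d₁).mul_val_inv)

@[simp] lemma U₁_val : ↑(U₁ p₁ d₁) = φ p₁ d₁ (X 0) := rfl
@[simp] lemma U₂_val : ↑(U₂ p₁ d₁) = φ p₁ d₁ (X 3) := rfl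

def bwdMon : Multiplicative (ℤ × ℤ) →* (Loc p₁ d₁)ˣ where
  toFun z := U₁ p₁ d₁ ^ (Multiplicative.toAdd z).1 * U₂ p₁ d₁ ^ (Multiplicative.toAdd z).2
  map_one' := by simp
  map_mul' x y := by
    simp only [toAdd_mul, Prod.fst_add, Prod.snd_add, zpow_add]
    rw [mul_mul_mul_comm]

def bwd : Laurent2 →ₐ[ℂ] Loc p₁ d₁ :=
  AddMonoidAlgebra.lift ℂ (Loc p₁ d₁) (ℤ × ℤ)
    ((Units.coeHom (Loc p₁ d₁)).comp (bwdMon p₁ d₁))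

lemma bwd_single (z : ℤ × ℤ) (c : ℂ) :
    bwd p₁ d₁ (single z c) = c • ↑(U₁ p₁ d₁ ^ z.1 * U₂ p₁ d₁ ^ z.2) := by
  rw [bwd, AddMonoidAlgebra.lift_single]
  rfl

lemma bwd_single_one (z : ℤ × ℤ) :
    bwd p₁ d₁ (single z 1) = ↑(U₁ p₁ d₁ ^ z.1 * U₂ p₁ d₁ ^ z.2) := by
  rw [bwd_single, one_smul]

/-! ### `bwd ∘ fwd = id` on generators -/

lemma bwd_fwd_X0 : bwd p₁ d₁ (fwd₀ p₁ d₁ (X 0)) = φ p₁ d₁ (X 0) := by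
  rw [fwd₀_X]
  show bwd p₁ d₁ (single ((1:ℤ),(0:ℤ)) 1) = _
  rw [bwd_single_one]
  simp

lemma bwd_fwd_X3 : bwd p₁ d₁ (fwd₀ p₁ d₁ (X 3)) = φ p₁ d₁ (X 3) := by
  rw [fwd₀_X]
  show bwd p₁ d₁ (single ((0:ℤ),(1:ℤ)) 1) = _
  rw [bwd_single_one]
  simp

lemma bwd_fwd_X1 : bwd p₁ d₁ (fwd₀ p₁ d₁ (X 1)) = φ p₁ d₁ (X 1) := by
  rw [fwd₀_X]
  show bwd p₁ d₁ ((single ((1:ℤ),(0:ℤ)) 1 - 1) * single ((0:ℤ),(-1:ℤ)) 1) = _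
  rw [map_mul, map_sub, map_one, bwd_single_one, bwd_single_one]
  simp only [zpow_one, zpow_zero, mul_one, zpow_neg, one_mul, U₁_val]
  rw [Units.mul_inv_eq_iff_eq_mul, U₂_val]
  linear_combination -hrel2 p₁ d₁

lemma bwd_fwd_X2 : bwd p₁ d₁ (fwd₀ p₁ d₁ (X 2)) = φ p₁ d₁ (X 2) := by
  rw [fwd₀_X]
  show bwd p₁ d₁ ((single ((1:ℤ),(0:ℤ)) 1 - 1 -
      Polynomial.aeval (single ((1:ℤ),(0:ℤ)) 1 : Laurent2) p₁.reverse *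
        single ((0:ℤ),(1:ℤ)) 1) * single (-(d₁:ℤ), (-1:ℤ)) 1) = _
  simp only [map_mul, map_sub, map_one]
  rw [← Polynomial.aeval_algHom_apply]
  simp only [bwd_single_one]
  have hinv : U₁ p₁ d₁ ^ (-(d₁:ℤ), (-1:ℤ)).1 * U₂ p₁ d₁ ^ (-(d₁:ℤ), (-1:ℤ)).2 =
      (U₁ p₁ d₁ ^ d₁ * U₂ p₁ d₁)⁻¹ := by
    show U₁ p₁ d₁ ^ (-(d₁:ℤ)) * U₂ p₁ d₁ ^ (-1:ℤ) = _
    rw [zpow_neg, zpow_neg, zpow_one, ← mul_inv, zpow_natCast]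
  rw [hinv]
  simp only [zpow_one, zpow_zero, mul_one, one_mul, U₁_val, U₂_val]
  rw [Units.mul_inv_eq_iff_eq_mul, Units.val_mul, Units.val_pow_eq_pow_val, U₁_val, U₂_val]
  linear_combination (-(φ p₁ d₁ (X 3))) * hrel1 p₁ d₁ - hrel2 p₁ d₁

/-! ### `fwd ∘ bwd = id` -/

def VU : Multiplicative (ℤ × ℤ) →* Laurent2ˣ :=
  (AddMonoidAlgebra.of ℂ (ℤ × ℤ)).toHomUnits

lemma VU_val (z : ℤ × ℤ) : ↑(VU (Multiplicative.ofAdd z)) = (single z 1 : Laurent2) := rfl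

lemma fwd_bwd (z : ℤ × ℤ) :
    fwd p₁ d₁ (bwd p₁ d₁ (single z 1)) = (single z 1 : Laurent2) := by
  rw [bwd_single_one]
  have key : Units.map (fwd p₁ d₁ : Loc p₁ d₁ →* Laurent2)
      (U₁ p₁ d₁ ^ z.1 * U₂ p₁ d₁ ^ z.2) = VU (Multiplicative.ofAdd z) := by
    have h1 : Units.map (fwd p₁ d₁ : Loc p₁ d₁ →* Laurent2) (U₁ p₁ d₁) =
        VU (Multiplicative.ofAdd ((1:ℤ), (0:ℤ))) := by
      refine Units.ext ?_
      rw [Units.coe_map]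
      show fwd p₁ d₁ (φ p₁ d₁ (X 0)) = _
      rw [fwd_φ, fwd₀_X]; rfl
    have h3 : Units.map (fwd p₁ d₁ : Loc p₁ d₁ →* Laurent2) (U₂ p₁ d₁) =
        VU (Multiplicative.ofAdd ((0:ℤ), (1:ℤ))) := by
      refine Units.ext ?_
      rw [Units.coe_map]
      show fwd p₁ d₁ (φ p₁ d₁ (X 3)) = _
      rw [fwd_φ, fwd₀_X]; rfl
    rw [map_mul, map_zpow, map_zpow, h1, h3, ← map_zpow VU, ← map_zpow VU, ← map_mul]
    congr 1
    rw [← ofAdd_zsmul, ← ofAdd_zsmul, ← ofAdd_add]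
    congr 1
    simp [Prod.ext_iff]
  have h := congrArg Units.val key
  rw [Units.coe_map, MonoidHom.coe_coe] at h
  rw [h, VU_val]

/-! ### assembling the equivalence -/

lemma comp_fwd_bwd :
    (fwd p₁ d₁).comp (bwd p₁ d₁) = AlgHom.id ℂ Laurent2 :=
  AddMonoidAlgebra.algHom_ext (fun z => by
    simpa using fwd_bwd p₁ d₁ z) (Subsingleton.elim _ _)

lemma comp_bwd_fwd :
    (bwd p₁ d₁).comp (fwd p₁ d₁) = AlgHom.id ℂ (Loc p₁ d₁) := by
  have h : ((bwd p₁ d₁).comp (fwd p₁ d₁)).toRingHom = (AlgHom.id ℂ (Loc p₁ d₁)).toRingHom := by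
    apply IsLocalization.ringHom_ext (Submonoid.powers
      (Ideal.Quotient.mk (Ideal.span (srel₁ p₁ d₁)) (X 0 * X 3)))
    apply Ideal.Quotient.ringHom_ext
    apply MvPolynomial.ringHom_ext
    · intro c
      show bwd p₁ d₁ (fwd p₁ d₁ (φ p₁ d₁ (C c))) = φ p₁ d₁ (C c)
      rw [← MvPolynomial.algebraMap_eq, AlgHom.commutes, AlgHom.commutes, AlgHom.commutes]
    · intro i
      show bwd p₁ d₁ (fwd p₁ d₁ (φ p₁ d₁ (X i))) = φ p₁ d₁ (X i)
      rw [fwd_φ]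
      fin_cases i
      · exact bwd_fwd_X0 p₁ d₁
      · exact bwd_fwd_X1 p₁ d₁
      · exact bwd_fwd_X2 p₁ d₁
      · exact bwd_fwd_X3 p₁ d₁
  exact AlgHom.ext fun x => RingHom.congr_fun h x

def e : Loc p₁ d₁ ≃ₐ[ℂ] Laurent2 :=
  AlgEquiv.ofAlgHom (fwd p₁ d₁) (bwd p₁ d₁) (comp_fwd_bwd p₁ d₁) (comp_bwd_fwd p₁ d₁)

end Stmt14Aux

open Stmt14Aux in
theorem stmt_14 (p₁ : Polynomial ℂ) (hm₁ : p₁.Monic)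
    (d₁ : ℕ) (hd₁ : d₁ = p₁.natDegree + 1) :
    ∃ e : Localization.Away (Ideal.Quotient.mk (Ideal.span (srel₁ p₁ d₁)) (X 0 * X 3))
        ≃ₐ[ℂ] Laurent2,
      -- x₁ ↦ v₁
      e (algebraMap (SRing₁ p₁ d₁) _ (Ideal.Quotient.mk _ (X 0))) =
        single ((1 : ℤ), (0 : ℤ)) 1 ∧
      -- x₂ ↦ (v₁ − 1)·v₂⁻¹
      e (algebraMap (SRing₁ p₁ d₁) _ (Ideal.Quotient.mk _ (X 1))) =
        (single ((1 : ℤ), (0 : ℤ)) 1 - 1) * single ((0 : ℤ), (-1 : ℤ)) 1 ∧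
      -- y₁ ↦ (v₁ − 1 − p̂₁(v₁)·v₂)·(v₁^{d₁}·v₂)⁻¹
      e (algebraMap (SRing₁ p₁ d₁) _ (Ideal.Quotient.mk _ (X 2))) =
        (single ((1 : ℤ), (0 : ℤ)) 1 - 1 -
          Polynomial.aeval (single ((1 : ℤ), (0 : ℤ)) 1 : Laurent2) p₁.reverse *
            single ((0 : ℤ), (1 : ℤ)) 1) * single (-(d₁ : ℤ), (-1 : ℤ)) 1 ∧
      -- y₂ ↦ v₂
      e (algebraMap (SRing₁ p₁ d₁) _ (Ideal.Quotient.mk _ (X 3))) =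
        single ((0 : ℤ), (1 : ℤ)) 1 ∧
      -- inverse: v₁ ↦ x₁, v₂ ↦ y₂
      e.symm (single ((1 : ℤ), (0 : ℤ)) 1) =
        algebraMap (SRing₁ p₁ d₁) _ (Ideal.Quotient.mk _ (X 0)) ∧
      e.symm (single ((0 : ℤ), (1 : ℤ)) 1) =
        algebraMap (SRing₁ p₁ d₁) _ (Ideal.Quotient.mk _ (X 3)) := by
  refine ⟨e p₁ d₁, ?_, ?_, ?_, ?_, ?_, ?_⟩
  · show fwd p₁ d₁ (φ p₁ d₁ (X 0)) = _
    rw [fwd_φ, fwd₀_X]; rfl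
  · show fwd p₁ d₁ (φ p₁ d₁ (X 1)) = _
    rw [fwd_φ, fwd₀_X]; rfl
  · show fwd p₁ d₁ (φ p₁ d₁ (X 2)) = _
    rw [fwd_φ, fwd₀_X]; rfl
  · show fwd p₁ d₁ (φ p₁ d₁ (X 3)) = _
    rw [fwd_φ, fwd₀_X]; rfl
  · show bwd p₁ d₁ (single ((1:ℤ),(0:ℤ)) 1) = _
    have h := bwd_fwd_X0 p₁ d₁
    rw [fwd₀_X] at h
    exact h
  · show bwd p₁ d₁ (single ((0:ℤ),(1:ℤ)) 1) = _
    have h := bwd_fwd_X3 p₁ d₁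
    rw [fwd₀_X] at h
    exact h
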